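/- arXiv:2008.03255 — 2 statements merged into one kernel-verified Lean document; each statement's English description precedes it below -/
import Mathlib

section
/- Let P be the probability measure on ℝ supported on {1,…,6} with f(j) = (3/10)^{j−1}·(7/10) for j = 1,…,5 and f(6) = (3/10)^5. Then the fifth quantization error equals 1701/1000000, attained at {1, 2, 3, 4, a} where a = E(X | X ∈ {5,6}). -/
/-- Mass function: f(j) = (3/10)^(j-1)·(7/10) for j = 1,…,5 and f(6) = (3/10)^5. -/
noncomputable def massB (j : ℕ) : ℝ := if j = 6 then (3/10)^5 else (3/10)^(j-1) * (7/10)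

/-- Distortion error of a nonempty finite set α for the measure with mass `massB`. -/
noncomputable def errB (α : Finset ℝ) (h : α.Nonempty) : ℝ :=
  ∑ j ∈ Finset.Icc 1 6, massB j * α.inf' h (fun a => ((j : ℝ) - a)^2)

/-- Conditional expectation E(X | X ∈ {k,…,l}). -/
noncomputable def avB (k l : ℕ) : ℝ :=
  (∑ j ∈ Finset.Icc k l, (j : ℝ) * massB j) / (∑ j ∈ Finset.Icc k l, massB j)

lemma massB_pos (j : ℕ) : 0 < massB j := by
  unfold massB; split <;> positivity

lemma pairB (c1 c2 x y a : ℝ) (h1 : 0 < c1) (h2 : 0 < c2) :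
    c1*c2*(x-y)^2/(c1+c2) ≤ c1*(x-a)^2 + c2*(y-a)^2 := by
  rw [div_le_iff₀ (by positivity)]
  nlinarith [sq_nonneg (c1*(x-a) + c2*(y-a))]

lemma numB (j j' : ℕ) (hj : j ∈ Finset.Icc 1 6) (hj' : j' ∈ Finset.Icc 1 6) (hne : j ≠ j') :
    (1701/1000000 : ℝ) ≤ massB j * massB j' * ((j:ℝ)-(j':ℝ))^2/(massB j + massB j') := by
  simp only [Finset.mem_Icc] at hj hj'
  obtain ⟨h1, h2⟩ := hj
  obtain ⟨h3, h4⟩ := hj'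
  interval_cases j <;> interval_cases j' <;> simp_all [massB] <;> norm_num

lemma errB_val : errB {1, 2, 3, 4, avB 5 6} (by simp) = 1701/1000000 := by
  have hav : avB 5 6 = 53/10 := by
    unfold avB
    rw [show (Finset.Icc 5 6 : Finset ℕ) = {5,6} by decide]
    norm_num [massB]
  rw [hav]
  unfold errB
  rw [show (Finset.Icc 1 6 : Finset ℕ) = {1,2,3,4,5,6} by decide]
  norm_num [Finset.sum_insert, Finset.mem_insert, Finset.inf'_insert, massB,
    min_def]

lemma errB_lower (α : Finset ℝ) (h : α.Nonempty) (hc : α.card ≤ 5) :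
    (1701/1000000 : ℝ) ≤ errB α h := by
  -- choose nearest point for each j
  have hch : ∀ j : ℕ, ∃ a ∈ α, α.inf' h (fun a => ((j : ℝ) - a)^2) = ((j : ℝ) - a)^2 :=
    fun j => Finset.exists_mem_eq_inf' h _
  choose g hg hval using hch
  have hpig : ∃ j ∈ Finset.Icc 1 6, ∃ j' ∈ Finset.Icc 1 6, j ≠ j' ∧ g j = g j' := by
    apply Finset.exists_ne_map_eq_of_card_lt_of_maps_to
    · simpa using lt_of_le_of_lt hc (by norm_num)
    · exact fun j _ => hg j
  obtain ⟨j, hj, j', hj', hne, heq⟩ := hpig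
  have key : massB j * ((j:ℝ) - g j)^2 + massB j' * ((j':ℝ) - g j')^2 ≤ errB α h := by
    unfold errB
    have hsub : ({j, j'} : Finset ℕ) ⊆ Finset.Icc 1 6 := by
      intro x hx
      simp only [Finset.mem_insert, Finset.mem_singleton] at hx
      rcases hx with rfl | rfl <;> assumption
    calc massB j * ((j:ℝ) - g j)^2 + massB j' * ((j':ℝ) - g j')^2
        = ∑ i ∈ ({j, j'} : Finset ℕ), massB i * α.inf' h (fun a => ((i : ℝ) - a)^2) := by
          rw [Finset.sum_pair hne, hval j, hval j']
      _ ≤ ∑ i ∈ Finset.Icc 1 6, massB i * α.inf' h (fun a => ((i : ℝ) - a)^2) := by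
          apply Finset.sum_le_sum_of_subset_of_nonneg hsub
          intro i _ _
          have : (0:ℝ) ≤ α.inf' h (fun a => ((i : ℝ) - a)^2) := by
            obtain ⟨a, _, ha⟩ := Finset.exists_mem_eq_inf' h (fun a => ((i : ℝ) - a)^2)
            rw [ha]; positivity
          exact mul_nonneg (massB_pos i).le this
  refine le_trans ?_ key
  have := pairB (massB j) (massB j') (j:ℝ) (j':ℝ) (g j) (massB_pos j) (massB_pos j')
  rw [heq] at this ⊢
  exact le_trans (numB j j' hj hj' hne) this

theorem stmt6 :
    sInf {v : ℝ | ∃ (α : Finset ℝ) (h : α.Nonempty), α.card ≤ 5 ∧ v = errB α h}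
      = 1701/1000000 ∧
    errB {1, 2, 3, 4, avB 5 6} (by simp) = 1701/1000000 := by
  constructor
  · apply IsLeast.csInf_eq
    constructor
    · refine ⟨{1, 2, 3, 4, avB 5 6}, by simp, ?_, errB_val.symm⟩
      apply le_trans (Finset.card_insert_le _ _)
      apply Nat.succ_le_succ
      apply le_trans (Finset.card_insert_le _ _)
      apply Nat.succ_le_succ
      apply le_trans (Finset.card_insert_le _ _)
      apply Nat.succ_le_succ
      apply le_trans (Finset.card_insert_le _ _)
      apply Nat.succ_le_succ
      simp
    · rintro v ⟨α, h, hc, rfl⟩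
      exact errB_lower α h hc
  · exact errB_val
end

section
/- Let P be the probability measure on ℝ with P({1/k}) = 1/2^k for integers k ≥ 1. The second quantization error V_2 = inf over sets α with |α| ≤ 2 of ∑_k (1/2^k) min_{a∈α}(1/k − a)² equals (π² − 12 − 30 log²2 + 24 log 2)/12, attained at the set {a, 1}, where a = E(X | X ∈ {1/k : k ≥ 2}) = 2(log 2 − 1/2). -/
open Real Filter Topology Set

/-- Distortion error of a nonempty finite set α for the measure P({1/k}) = 1/2^k, k ≥ 1. -/
noncomputable def errR (α : Finset ℝ) (h : α.Nonempty) : ℝ :=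
  ∑' k : ℕ, (1/2^(k+1) : ℝ) * α.inf' h (fun a => (1/(k+1 : ℝ) - a)^2)

/-- Conditional expectation E(X | X ∈ {1/k : k ≥ m}). -/
noncomputable def avRTail (m : ℕ) : ℝ :=
  (∑' k : ℕ, (1/2^(k+m) : ℝ) * (1/(k+m : ℝ))) / (∑' k : ℕ, (1/2^(k+m) : ℝ))

noncomputable def dlF (x : ℝ) : ℝ := ∑' n : ℕ, x^(n+1)/((n:ℝ)+1)^2


lemma sumInv2 : Summable (fun n : ℕ => 1/((n:ℝ)+1)^2) := by
  have := Real.summable_one_div_nat_pow.mpr (le_refl 2)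
  exact_mod_cast (summable_nat_add_iff 1).mpr this

lemma dlF_summable {x : ℝ} (hx : |x| ≤ 1) : Summable (fun n : ℕ => x^(n+1)/((n:ℝ)+1)^2) := by
  apply Summable.of_norm
  apply sumInv2.of_nonneg_of_le (fun n => norm_nonneg _)
  intro n
  rw [norm_div, norm_pow]
  have h1 : (0:ℝ) < ((n:ℝ)+1)^2 := by positivity
  rw [Real.norm_eq_abs x, Real.norm_eq_abs, abs_of_pos h1]
  rw [div_le_div_iff₀ h1 h1]
  nlinarith [pow_le_one₀ (abs_nonneg x) hx (n := n+1)]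

lemma dlF_contOn : ContinuousOn dlF (Icc (-1:ℝ) 1) := by
  apply continuousOn_tsum (u := fun n : ℕ => 1/((n:ℝ)+1)^2) (fun i => by fun_prop) sumInv2
  intro n x hx
  rw [norm_div, norm_pow, Real.norm_eq_abs x]
  have h1 : (0:ℝ) < ((n:ℝ)+1)^2 := by positivity
  rw [Real.norm_eq_abs, abs_of_pos h1]
  have hx1 : |x| ≤ 1 := abs_le.mpr ⟨hx.1, hx.2⟩
  have := pow_le_one₀ (abs_nonneg x) hx1 (n := n+1)
  rw [div_le_div_iff₀ h1 h1]; nlinarith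

lemma dlF_one : dlF 1 = π^2/6 := by
  have h := hasSum_zeta_two
  have h2 : HasSum (fun n : ℕ => (1:ℝ)/((n:ℝ)+1)^2) (π^2/6) := by
    have h3 := (hasSum_nat_add_iff' (f := fun n : ℕ => (1:ℝ)/(n:ℝ)^2) (g := π^2/6) 1).mpr h
    simp only [Finset.range_one, Finset.sum_singleton, Nat.cast_zero] at h3
    norm_num at h3
    convert h3 using 2 with n
    · rfl
    push_cast; ring_nf
  have : dlF 1 = ∑' n : ℕ, (1:ℝ)/((n:ℝ)+1)^2 := by
    unfold dlF; congr 1; funext n; rw [one_pow]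
  rw [this, h2.tsum_eq]

lemma dlF_zero : dlF 0 = 0 := by
  unfold dlF
  have : (fun n:ℕ => (0:ℝ)^(n+1)/((n:ℝ)+1)^2) = fun _ => 0 := by
    funext n; simp [zero_pow (Nat.succ_ne_zero n)]
  rw [this, tsum_zero]


-- derivative of dlF inside (-1,1)
lemma dlF_hasDerivAt {x : ℝ} (hx : |x| < 1) :
    HasDerivAt dlF (∑' n : ℕ, x^n/((n:ℝ)+1)) x := by
  set r : ℝ := (1 + |x|)/2 with hr
  have hr1 : r < 1 := by rw [hr]; linarith
  have hxr : |x| < r := by rw [hr]; linarith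
  have hr0 : 0 ≤ r := by positivity
  have key := hasDerivAt_tsum_of_isPreconnected (u := fun n : ℕ => r^n)
    (t := Ioo (-r) r) (y₀ := 0) (y := x)
    (g := fun (n : ℕ) (z : ℝ) => z^(n+1)/((n:ℝ)+1)^2)
    (g' := fun (n : ℕ) (z : ℝ) => z^n/((n:ℝ)+1))
    (summable_geometric_of_lt_one hr0 hr1) isOpen_Ioo (convex_Ioo _ _).isPreconnected
    ?_ ?_ ?_ ?_ ?_
  · exact key
  · intro n y _
    have h1 : HasDerivAt (fun z : ℝ => z^(n+1)) (((n:ℝ)+1) * y^n) y := by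
      simpa using hasDerivAt_pow (n+1) y
    have := h1.div_const (((n:ℝ)+1)^2)
    convert this using 1
    · rfl
    field_simp
  · intro n y hy
    have hy1 : |y| ≤ r := by
      rw [abs_le]; exact ⟨hy.1.le, hy.2.le⟩
    rw [Real.norm_eq_abs, abs_div, abs_pow]
    have h2 : (0:ℝ) < (n:ℝ)+1 := by positivity
    rw [abs_of_pos h2]
    calc |y|^n / ((n:ℝ)+1) ≤ |y|^n / 1 := by
          apply div_le_div_of_nonneg_left (by positivity) one_pos (by linarith)
      _ = |y|^n := div_one _
      _ ≤ r^n := pow_le_pow_left₀ (abs_nonneg y) hy1 n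
  · rw [mem_Ioo]; constructor <;> [linarith [abs_nonneg x]; positivity]
  · apply Summable.of_norm
    apply (summable_geometric_of_lt_one hr0 hr1).of_nonneg_of_le (fun n => norm_nonneg _)
    intro n
    simp [zero_pow (Nat.succ_ne_zero n)]
    positivity
  · rw [mem_Ioo]; rw [abs_lt] at hxr; exact hxr

lemma dlF_deriv_eq {x : ℝ} (hx0 : x ≠ 0) (hx : |x| < 1) :
    HasDerivAt dlF (-Real.log (1-x)/x) x := by
  have h := dlF_hasDerivAt hx
  have hs := Real.hasSum_pow_div_log_of_abs_lt_one hx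
  have hs2 : HasSum (fun n : ℕ => x^n/((n:ℝ)+1)) (-Real.log (1-x)/x) := by
    have h2 := hs.div_const x
    have he : (fun n : ℕ => x^n/((n:ℝ)+1)) = fun n : ℕ => (x^(n+1)/((n:ℝ)+1))/x := by
      funext n
      rw [pow_succ]
      field_simp
    rw [he]
    exact h2
  rw [← hs2.tsum_eq]
  exact h



noncomputable def dlG (x : ℝ) : ℝ := dlF x + dlF (1-x) + Real.log x * Real.log (1-x)

lemma dlG_deriv {x : ℝ} (hx : x ∈ Ioo (0:ℝ) 1) : HasDerivAt dlG 0 x := by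
  obtain ⟨h0, h1⟩ := hx
  have hx0 : x ≠ 0 := ne_of_gt h0
  have hx1 : (1:ℝ) - x ≠ 0 := by intro h; linarith [sub_eq_zero.mp h]
  have hxa : |x| < 1 := by rw [abs_lt]; constructor <;> linarith
  have hxb : |1 - x| < 1 := by rw [abs_lt]; constructor <;> linarith
  have hd1 : HasDerivAt dlF (-Real.log (1-x)/x) x := dlF_deriv_eq hx0 hxa
  have hlin : HasDerivAt (fun y : ℝ => 1 - y) (-1) x := by
    simpa using (hasDerivAt_id x).const_sub 1
  have hd2 : HasDerivAt (fun y : ℝ => dlF (1 - y)) (Real.log x/(1-x)) x := by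
    have := (dlF_deriv_eq hx1 hxb).comp x hlin
    refine this.congr_deriv ?_
    have h1x : (1:ℝ) - (1 - x) = x := by ring
    rw [h1x]
    field_simp
  have hd3 : HasDerivAt (fun y : ℝ => Real.log y * Real.log (1 - y))
      ((1/x) * Real.log (1-x) + Real.log x * (-(1/(1-x)))) x := by
    have hl1 : HasDerivAt Real.log (1/x) x := by simpa [one_div] using Real.hasDerivAt_log hx0
    have hl2 : HasDerivAt (fun y : ℝ => Real.log (1 - y)) (-(1/(1-x))) x := by
      have := (Real.hasDerivAt_log hx1).comp x hlin
      refine this.congr_deriv ?_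
      field_simp
    exact hl1.mul hl2
  have := (hd1.add hd2).add hd3
  refine this.congr_deriv ?_
  field_simp
  ring

lemma dlG_const {b : ℝ} (hb : b ∈ Ico (1/2 : ℝ) 1) : dlG b = dlG (1/2) := by
  have key := constant_of_has_deriv_right_zero (f := dlG) (a := (1/2:ℝ)) (b := b)
    (fun x hx => by
      have hmem : x ∈ Ioo (0:ℝ) 1 := ⟨by rcases hx with ⟨h1, _⟩; linarith,
        by rcases hx with ⟨_, h2⟩; rcases hb with ⟨_, hb2⟩; linarith⟩
      exact (dlG_deriv hmem).continuousAt.continuousWithinAt)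
    (fun x hx => by
      have hmem : x ∈ Ioo (0:ℝ) 1 := ⟨by rcases hx with ⟨h1, _⟩; linarith,
        by rcases hx with ⟨_, h2⟩; rcases hb with ⟨_, hb2⟩; linarith⟩
      exact (dlG_deriv hmem).hasDerivWithinAt)
  exact key b ⟨hb.1, le_refl b⟩

lemma dlG_tendsto : Tendsto dlG (𝓝[<] (1:ℝ)) (𝓝 (π^2/6)) := by
  have hm1 : ((-1:ℝ)) < 1 := by norm_num
  have t1 : Tendsto dlF (𝓝[<] (1:ℝ)) (𝓝 (π^2/6)) := by
    have c1 : Tendsto dlF (𝓝[Icc (-1:ℝ) 1] 1) (𝓝 (dlF 1)) :=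
      dlF_contOn.continuousWithinAt ⟨by norm_num, le_refl 1⟩
    rw [dlF_one] at c1
    rw [← nhdsWithin_Ioo_eq_nhdsLT hm1]
    exact c1.mono_left (nhdsWithin_mono _ Ioo_subset_Icc_self)
  have t2 : Tendsto (fun x : ℝ => dlF (1 - x)) (𝓝[<] (1:ℝ)) (𝓝 0) := by
    have c2 : Tendsto dlF (𝓝[Icc (-1:ℝ) 1] 0) (𝓝 (dlF 0)) :=
      dlF_contOn.continuousWithinAt ⟨by norm_num, by norm_num⟩
    rw [dlF_zero] at c2
    have m : Tendsto (fun x : ℝ => 1 - x) (𝓝[<] (1:ℝ)) (𝓝[Icc (-1:ℝ) 1] 0) := by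
      apply tendsto_nhdsWithin_of_tendsto_nhds_of_eventually_within
      · have : Tendsto (fun x : ℝ => 1 - x) (𝓝 1) (𝓝 (1 - 1)) :=
          (continuous_const.sub continuous_id).tendsto 1
        simpa using this.mono_left nhdsWithin_le_nhds
      · have hIoo : Ioo (0:ℝ) 1 ∈ 𝓝[<] (1:ℝ) := Ioo_mem_nhdsLT_of_mem ⟨by norm_num, le_refl 1⟩
        filter_upwards [hIoo] with x hx
        exact ⟨by rcases hx with ⟨h1,h2⟩; norm_num; linarith, by rcases hx with ⟨h1,h2⟩; linarith⟩
    exact c2.comp m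
  have t3 : Tendsto (fun x : ℝ => Real.log x * Real.log (1 - x)) (𝓝[<] (1:ℝ)) (𝓝 0) := by
    have A : Tendsto (fun x : ℝ => Real.log x / (x - 1)) (𝓝[<] (1:ℝ)) (𝓝 1) := by
      have hlog : HasDerivAt Real.log 1 (1:ℝ) := by
        simpa using Real.hasDerivAt_log one_ne_zero
      have := hasDerivAt_iff_tendsto_slope.mp hlog
      have h2 := this.mono_left (nhdsWithin_mono _ (fun y hy => ne_of_lt hy : Iio (1:ℝ) ⊆ {y | y ≠ 1}))
      apply h2.congr
      intro y
      simp [slope_def_field, Real.log_one]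
    have B : Tendsto (fun x : ℝ => (x - 1) * Real.log (1 - x)) (𝓝[<] (1:ℝ)) (𝓝 0) := by
      have base : Tendsto (fun t : ℝ => Real.log t * t) (𝓝[>] (0:ℝ)) (𝓝 0) := by
        have := tendsto_log_mul_rpow_nhdsGT_zero (r := 1) one_pos
        apply this.congr
        intro t
        rw [Real.rpow_one]
      have m2 : Tendsto (fun x : ℝ => 1 - x) (𝓝[<] (1:ℝ)) (𝓝[>] (0:ℝ)) := by
        apply tendsto_nhdsWithin_of_tendsto_nhds_of_eventually_within
        · have : Tendsto (fun x : ℝ => 1 - x) (𝓝 1) (𝓝 (1 - 1)) :=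
            (continuous_const.sub continuous_id).tendsto 1
          simpa using this.mono_left nhdsWithin_le_nhds
        · filter_upwards [self_mem_nhdsWithin] with x hx
          simp only [mem_Iio] at hx
          simp only [mem_Ioi]
          linarith
      have comp := base.comp m2
      have : Tendsto (fun x : ℝ => Real.log (1 - x) * (1 - x)) (𝓝[<] (1:ℝ)) (𝓝 0) := comp
      have h3 := this.neg
      rw [neg_zero] at h3
      apply h3.congr
      intro x
      ring
    have := A.mul B
    rw [one_mul] at this
    apply this.congr'
    filter_upwards [self_mem_nhdsWithin] with x hx
    simp only [mem_Iio] at hx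
    have hx1 : x - 1 ≠ 0 := by intro h; linarith [sub_eq_zero.mp h]
    field_simp
  have := (t1.add t2).add t3
  simpa using (show Tendsto dlG _ (𝓝 (π^2/6 + 0 + 0)) from this)

lemma dlF_half : dlF (1/2 : ℝ) = π^2/12 - (Real.log 2)^2/2 := by
  have hconst : Tendsto dlG (𝓝[<] (1:ℝ)) (𝓝 (dlG (1/2))) := by
    apply tendsto_const_nhds.congr'
    have hIco : Ico (1/2:ℝ) 1 ∈ 𝓝[<] (1:ℝ) := Ico_mem_nhdsLT_of_mem ⟨by norm_num, le_refl 1⟩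
    filter_upwards [hIco] with x hx
    exact (dlG_const hx).symm
  have := tendsto_nhds_unique hconst dlG_tendsto
  have hlog : Real.log ((1:ℝ)/2) = -Real.log 2 := by
    rw [one_div, Real.log_inv]
  have hG : dlG (1/2 : ℝ) = dlF (1/2) + dlF (1/2) + (Real.log 2)^2 := by
    unfold dlG
    norm_num [hlog]
    ring
  rw [hG] at this
  linarith

lemma hWX2 : HasSum (fun k:ℕ => (1/2^(k+1):ℝ) * (1/((k:ℝ)+1))^2) (π^2/12 - (Real.log 2)^2/2) := by
  have hs : Summable (fun n:ℕ => (1/2:ℝ)^(n+1)/((n:ℝ)+1)^2) :=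
    dlF_summable (by rw [abs_of_pos] <;> norm_num)
  have h := hs.hasSum
  rw [show (∑' n:ℕ, ((1/2:ℝ)^(n+1)/((n:ℝ)+1)^2)) = dlF (1/2) from rfl, dlF_half] at h
  convert h using 1
  funext k; rw [div_pow]; simp only [one_div, inv_pow]; ring


lemma hW : HasSum (fun k:ℕ => (1/2^(k+1):ℝ)) 1 := by
  have h := hasSum_geometric_of_lt_one (by norm_num : (0:ℝ) ≤ 1/2) (by norm_num : (1/2:ℝ) < 1)
  have h2 := h.mul_left (1/2)
  have he : (fun k:ℕ => (1/2^(k+1):ℝ)) = fun k:ℕ => (1/2:ℝ) * (1/2)^k := by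
    funext k; rw [pow_succ]; simp only [one_div, inv_pow]; ring
  rw [he]
  convert h2 using 1
  · rfl
  norm_num

lemma hWX : HasSum (fun k:ℕ => (1/2^(k+1):ℝ) * (1/((k:ℝ)+1))) (Real.log 2) := by
  have h := Real.hasSum_pow_div_log_of_abs_lt_one (x := 1/2) (by rw [abs_of_pos] <;> norm_num)
  have hlog : -Real.log (1 - 1/2 : ℝ) = Real.log 2 := by
    norm_num
    rw [show (1/2 : ℝ) = 2⁻¹ by norm_num, Real.log_inv]
    ring
  rw [hlog] at h
  have he : (fun k:ℕ => (1/2^(k+1):ℝ) * (1/((k:ℝ)+1))) =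
      fun n:ℕ => (1/2:ℝ)^(n+1)/((n:ℝ)+1) := by
    funext n; rw [div_pow]; ring
  rw [he]; exact_mod_cast h

lemma hQuad (t : ℝ) : HasSum (fun k:ℕ => (1/2^(k+1):ℝ) * (1/((k:ℝ)+1) - t)^2)
    (π^2/12 - (Real.log 2)^2/2 - 2*t*Real.log 2 + t^2) := by
  have h := (hWX2.sub (hWX.mul_left (2*t))).add (hW.mul_left (t^2))
  have he : (fun k:ℕ => (1/2^(k+1):ℝ) * (1/((k:ℝ)+1) - t)^2) =
      fun k:ℕ => ((1/2^(k+1):ℝ) * (1/((k:ℝ)+1))^2 - 2*t*((1/2^(k+1):ℝ) * (1/((k:ℝ)+1))))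
        + t^2 * (1/2^(k+1):ℝ) := by
    funext k; ring
  rw [he]
  convert h using 1
  · rfl
  ring

lemma hQuadTail (t : ℝ) : HasSum (fun k:ℕ => (1/2^(k+2):ℝ) * (1/((k:ℝ)+2) - t)^2)
    (π^2/12 - (Real.log 2)^2/2 - 1/2 - 2*t*(Real.log 2 - 1/2) + t^2/2) := by
  have h := (hasSum_nat_add_iff'
    (f := fun k:ℕ => (1/2^(k+1):ℝ) * (1/((k:ℝ)+1) - t)^2) 1).mpr (hQuad t)
  simp only [Finset.range_one, Finset.sum_singleton, Nat.cast_zero] at h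
  norm_num at h
  have he : (fun k:ℕ => (1/2^(k+2):ℝ) * (1/((k:ℝ)+2) - t)^2) =
      fun n:ℕ => (1/2^(n+1+1):ℝ) * (1/((n:ℝ)+1+1) - t)^2 := by
    funext k; norm_num; ring_nf
  rw [he]
  convert h using 1
  · rfl
  · funext n; norm_num
  · ring




lemma errR_congr {α β : Finset ℝ} (h : α.Nonempty) (h' : β.Nonempty) (e : α = β) :
    errR α h = errR β h' := by subst e; rfl

lemma errR_single (a : ℝ) (h : ({a} : Finset ℝ).Nonempty) :
    errR {a} h = ∑' k:ℕ, (1/2^(k+1):ℝ) * (1/((k:ℝ)+1) - a)^2 := by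
  unfold errR; congr 1

lemma errR_pair (a b : ℝ) (h : ({a, b} : Finset ℝ).Nonempty) :
    errR {a, b} h = ∑' k:ℕ, (1/2^(k+1):ℝ) *
      min ((1/((k:ℝ)+1) - a)^2) ((1/((k:ℝ)+1) - b)^2) := by
  unfold errR; congr 1; funext k
  congr 1
  simp [Finset.inf'_insert]

lemma summable_min (a b : ℝ) : Summable (fun k:ℕ => (1/2^(k+1):ℝ) *
    min ((1/((k:ℝ)+1) - a)^2) ((1/((k:ℝ)+1) - b)^2)) := by
  apply Summable.of_nonneg_of_le
    (fun k => mul_nonneg (by positivity) (le_min (sq_nonneg _) (sq_nonneg _)))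
    (fun k => mul_le_mul_of_nonneg_left (min_le_left _ _) (by positivity))
    (hQuad a).summable

lemma single_bound (t : ℝ) :
    (π^2 - 12 - 30*(Real.log 2)^2 + 24*Real.log 2)/12 ≤
      ∑' k:ℕ, (1/2^(k+1):ℝ) * (1/((k:ℝ)+1) - t)^2 := by
  rw [(hQuad t).tsum_eq]
  nlinarith [sq_nonneg (t - Real.log 2), sq_nonneg (Real.log 2 - 1)]

lemma vle : (π^2 - 12 - 30*(Real.log 2)^2 + 24*Real.log 2)/12 ≤ 1/24 := by
  nlinarith [Real.pi_lt_d2, Real.pi_gt_three, Real.log_two_gt_d9, Real.log_two_lt_d9]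

lemma key_bound (a b : ℝ) (hab : a ≤ b) :
    (π^2 - 12 - 30*(Real.log 2)^2 + 24*Real.log 2)/12 ≤
      ∑' k:ℕ, (1/2^(k+1):ℝ) *
        min ((1/((k:ℝ)+1) - a)^2) ((1/((k:ℝ)+1) - b)^2) := by
  set g := fun k:ℕ => (1/2^(k+1):ℝ) *
    min ((1/((k:ℝ)+1) - a)^2) ((1/((k:ℝ)+1) - b)^2) with hg
  have hnn : ∀ k, 0 ≤ g k :=
    fun k => mul_nonneg (by positivity) (le_min (sq_nonneg _) (sq_nonneg _))
  have hsum := summable_min a b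
  by_cases hc : a + b < 1
  · -- all-but-head case: use first two terms
    have h2 : ∑ k ∈ Finset.range 2, g k ≤ ∑' k, g k :=
      Summable.sum_le_tsum _ (fun k _ => hnn k) hsum
    have hg0 : g 0 = (1/2:ℝ) * (1 - b)^2 := by
      have m0 : min ((1-a)^2) ((1-b)^2) = ((1:ℝ)-b)^2 := min_eq_right (by nlinarith)
      rw [hg]; norm_num [m0]
    have hg1 : g 1 = (1/4:ℝ) * (1/2 - b)^2 := by
      have m1 : min ((1/2-a)^2) ((1/2-b)^2) = ((1:ℝ)/2-b)^2 := min_eq_right (by nlinarith)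
      rw [hg]; norm_num [m1]
    rw [Finset.sum_range_succ, Finset.sum_range_one, hg0, hg1] at h2
    have := vle
    nlinarith [sq_nonneg (b - 5/6)]
  · push_neg at hc
    have hsplit := Summable.tsum_eq_zero_add hsum
    have htail : ∀ k:ℕ, g (k+1) = (1/2^(k+2):ℝ) * (1/((k:ℝ)+2) - a)^2 := by
      intro k
      rw [hg]
      have hk0 : (0:ℝ) ≤ (k:ℝ) := Nat.cast_nonneg k
      have hxle : (1:ℝ)/((k:ℝ)+2) ≤ 1/2 := by
        rw [div_le_div_iff₀ (by linarith) (by norm_num)]; linarith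
      have hxpos : (0:ℝ) < 1/((k:ℝ)+2) := by positivity
      have hmin : min ((1/((k:ℝ)+2) - a)^2) ((1/((k:ℝ)+2) - b)^2) = (1/((k:ℝ)+2) - a)^2 :=
        min_eq_left (by nlinarith)
      have hcast : (1:ℝ)/(((k+1:ℕ):ℝ)+1) = 1/((k:ℝ)+2) := by push_cast; ring
      simp only [hcast, hmin]
    have hsum2 : ∑' k:ℕ, g (k+1) =
        π^2/12 - (Real.log 2)^2/2 - 1/2 - 2*a*(Real.log 2 - 1/2) + a^2/2 := by
      rw [tsum_congr htail, (hQuadTail a).tsum_eq]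
    rw [show ∑' k, g k = g 0 + ∑' k, g (k+1) from Summable.tsum_eq_zero_add hsum, hsum2]
    have hg0 : 0 ≤ g 0 := hnn 0
    nlinarith [sq_nonneg (a - (2*Real.log 2 - 1))]

lemma hWtail : HasSum (fun k:ℕ => (1/2^(k+2):ℝ)) (1/2) := by
  have h := (hasSum_nat_add_iff' (f := fun k:ℕ => (1/2^(k+1):ℝ)) 1).mpr hW
  simp only [Finset.range_one, Finset.sum_singleton] at h
  norm_num at h
  convert h using 1
  · rfl
  funext k; norm_num [pow_succ]

lemma hWXtail : HasSum (fun k:ℕ => (1/2^(k+2):ℝ) * (1/((k:ℝ)+2))) (Real.log 2 - 1/2) := by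
  have h := (hasSum_nat_add_iff'
    (f := fun k:ℕ => (1/2^(k+1):ℝ) * (1/((k:ℝ)+1))) 1).mpr hWX
  simp only [Finset.range_one, Finset.sum_singleton, Nat.cast_zero] at h
  norm_num at h
  convert h using 1
  · rfl
  funext k; push_cast; ring_nf


lemma avR2 : avRTail 2 = 2 * (Real.log 2 - 1/2) := by
  unfold avRTail
  have e1 : (∑' k:ℕ, (1/2^(k+2):ℝ) * (1/((k:ℝ)+(2:ℕ)))) = Real.log 2 - 1/2 := by
    rw [← hWXtail.tsum_eq]
    congr 1
  have e2 : (∑' k:ℕ, (1/2^(k+2):ℝ)) = (1/2:ℝ) := hWtail.tsum_eq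
  rw [e1, e2]
  ring

lemma err_opt (h : ({2*(Real.log 2 - 1/2), 1} : Finset ℝ).Nonempty) :
    errR {2*(Real.log 2 - 1/2), 1} h =
      (π^2 - 12 - 30*(Real.log 2)^2 + 24*Real.log 2)/12 := by
  set μ : ℝ := 2*(Real.log 2 - 1/2) with hμ
  rw [errR_pair]
  set g := fun k:ℕ => (1/2^(k+1):ℝ) *
    min ((1/((k:ℝ)+1) - μ)^2) ((1/((k:ℝ)+1) - 1)^2) with hg
  have hL1 : Real.log 2 < 1 := by
    have := Real.log_two_lt_d9; linarith
  have hL2 : (1:ℝ)/2 < Real.log 2 := by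
    have := Real.log_two_gt_d9; linarith
  have hg0 : g 0 = 0 := by
    have m0 : min ((1-μ)^2) (((1:ℝ)-1)^2) = ((1:ℝ)-1)^2 :=
      min_eq_right (by nlinarith [sq_nonneg (1-μ)])
    rw [hg]; norm_num
    positivity
  have htail : ∀ k:ℕ, g (k+1) = (1/2^(k+2):ℝ) * (1/((k:ℝ)+2) - μ)^2 := by
    intro k
    rw [hg]
    have hk0 : (0:ℝ) ≤ (k:ℝ) := Nat.cast_nonneg k
    have hxle : (1:ℝ)/((k:ℝ)+2) ≤ 1/2 := by
      rw [div_le_div_iff₀ (by linarith) (by norm_num)]; linarith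
    have hxpos : (0:ℝ) < 1/((k:ℝ)+2) := by positivity
    have hmin : min ((1/((k:ℝ)+2) - μ)^2) ((1/((k:ℝ)+2) - 1)^2) = (1/((k:ℝ)+2) - μ)^2 := by
      apply min_eq_left
      rw [hμ]
      nlinarith
    have hcast : (1:ℝ)/(((k+1:ℕ):ℝ)+1) = 1/((k:ℝ)+2) := by push_cast; ring
    simp only [hcast, hmin]
  have hsum2 : HasSum (fun k:ℕ => g (k+1))
      ((π^2 - 12 - 30*(Real.log 2)^2 + 24*Real.log 2)/12) := by
    have h2 := hQuadTail μ
    have he : (fun k:ℕ => g (k+1)) = fun k:ℕ => (1/2^(k+2):ℝ) * (1/((k:ℝ)+2) - μ)^2 :=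
      funext htail
    rw [he]
    convert h2 using 1
    rw [hμ]; ring
  have hginit : HasSum g ((π^2 - 12 - 30*(Real.log 2)^2 + 24*Real.log 2)/12) := by
    have h4 := (hasSum_nat_add_iff (f := g) 1).mp hsum2
    simp only [Finset.range_one, Finset.sum_singleton, hg0, add_zero] at h4
    exact h4
  exact hginit.tsum_eq

theorem stmt9 :
    avRTail 2 = 2 * (Real.log 2 - 1/2) ∧
    sInf {v : ℝ | ∃ (α : Finset ℝ) (h : α.Nonempty), α.card ≤ 2 ∧ v = errR α h}
      = (Real.pi^2 - 12 - 30 * (Real.log 2)^2 + 24 * Real.log 2) / 12 ∧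
    errR {avRTail 2, 1} (by simp) =
      (Real.pi^2 - 12 - 30 * (Real.log 2)^2 + 24 * Real.log 2) / 12 := by
  have h3 : errR {avRTail 2, 1} (by simp) =
      (Real.pi^2 - 12 - 30 * (Real.log 2)^2 + 24 * Real.log 2) / 12 := by
    exact (errR_congr _ (by simp) (by rw [avR2])).trans (err_opt _)
  refine ⟨avR2, ?_, h3⟩
  set V : ℝ := (Real.pi^2 - 12 - 30 * (Real.log 2)^2 + 24 * Real.log 2) / 12 with hV
  set S := {v : ℝ | ∃ (α : Finset ℝ) (h : α.Nonempty), α.card ≤ 2 ∧ v = errR α h} with hS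
  have hVmem : V ∈ S := by
    refine ⟨{avRTail 2, 1}, by simp, ?_, h3.symm⟩
    exact (Finset.card_insert_le _ _).trans (by simp)
  have hlb : ∀ v ∈ S, V ≤ v := by
    rintro v ⟨α, h, hcard, rfl⟩
    have h1 : 1 ≤ α.card := Finset.Nonempty.card_pos h
    have : α.card = 1 ∨ α.card = 2 := by omega
    rcases this with h1' | h2'
    · obtain ⟨a, rfl⟩ := Finset.card_eq_one.mp h1'
      rw [errR_single]
      exact single_bound a
    · obtain ⟨a, b, hne, rfl⟩ := Finset.card_eq_two.mp h2'
      rw [errR_pair]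
      rcases le_total a b with hab | hab
      · exact key_bound a b hab
      · have hk := key_bound b a hab
        have he : (fun k:ℕ => (1/2^(k+1):ℝ) *
              min ((1/((k:ℝ)+1) - a)^2) ((1/((k:ℝ)+1) - b)^2)) =
            fun k:ℕ => (1/2^(k+1):ℝ) *
              min ((1/((k:ℝ)+1) - b)^2) ((1/((k:ℝ)+1) - a)^2) := by
          funext k; rw [min_comm]
        rw [he]
        exact hk
  exact le_antisymm (csInf_le ⟨V, fun v hv => hlb v hv⟩ hVmem) (le_csInf ⟨V, hVmem⟩ hlb)
end
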